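/- For every positive integer k, 𝓛(k) ≥ Ω(3, ⌊k/2⌋) − 1. -/

import Mathlib

/-- A word `w` (restricted to positions `< n`) contains a congruential `t`-power modulo `k`:
`t` adjacent blocks of a common length `d ≥ 1`, all of whose sums are congruent mod `k`. -/
def ContainsCongPow (k t n : ℕ) (w : ℕ → ℕ) : Prop :=
  ∃ i d : ℕ, 1 ≤ d ∧ i + t * d ≤ n ∧
    ∀ j : ℕ, j < t →
      (∑ s ∈ Finset.Ico (i + j * d) (i + (j + 1) * d), w s) ≡
        (∑ s ∈ Finset.Ico i (i + d), w s) [MOD k]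

/-- `𝓛(k, t)`: the minimum `n` such that every word of length `n` over `{0, …, k-1}`
contains a congruential `t`-power modulo `k`. -/
noncomputable def Lfn (k t : ℕ) : ℕ :=
  sInf {n : ℕ | ∀ w : ℕ → ℕ, (∀ i, w i < k) → ContainsCongPow k t n w}

/-- `Ω(m, k)`: the smallest `n` such that every set `{x₁, …, xₙ}` with
`xᵢ ∈ [(i-1)k + 1, ik]` contains an `m`-term arithmetic progression. -/
noncomputable def Omega (m k : ℕ) : ℕ :=
  sInf {n : ℕ | ∀ x : ℕ → ℕ,
    (∀ i : ℕ, 1 ≤ i → i ≤ n → (i - 1) * k + 1 ≤ x i ∧ x i ≤ i * k) →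
    ∃ a d : ℕ, 1 ≤ d ∧ ∀ j : ℕ, j < m → ∃ i : ℕ, 1 ≤ i ∧ i ≤ n ∧ x i = a + j * d}

/-- `w₁(3, k)`: the minimum `n` such that every 2-coloring of `[1, n]` admits a
3-term arithmetic progression of the first color (`true`) or `k` consecutive integers
of the second color (`false`). -/
noncomputable def wOne (k : ℕ) : ℕ :=
  sInf {n : ℕ | ∀ χ : ℕ → Bool,
    (∃ a d : ℕ, 1 ≤ a ∧ 1 ≤ d ∧ a + 2 * d ≤ n ∧ ∀ j : ℕ, j < 3 → χ (a + j * d) = true) ∨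
    (∃ a : ℕ, 1 ≤ a ∧ a + (k - 1) ≤ n ∧ ∀ j : ℕ, j < k → χ (a + j) = false)}

/-- `w(ℓ; c)`: the van der Waerden number, the minimum `n` such that every `c`-coloring of
`[1, n]` admits a monochromatic `ℓ`-term arithmetic progression. -/
noncomputable def vdW (l c : ℕ) : ℕ :=
  sInf {n : ℕ | ∀ χ : ℕ → Fin c,
    ∃ a d : ℕ, 1 ≤ a ∧ 1 ≤ d ∧ a + (l - 1) * d ≤ n ∧
      ∀ j : ℕ, j < l → χ (a + j * d) = χ a}

lemma contains_mono {k t n n' : ℕ} {w : ℕ → ℕ} (h : n ≤ n') :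
    ContainsCongPow k t n w → ContainsCongPow k t n' w := by
  rintro ⟨i, d, h1, h2, h3⟩
  exact ⟨i, d, h1, h2.trans h, h3⟩

lemma contains_congr {k t n : ℕ} {w w' : ℕ → ℕ} (h : ∀ s, s < n → w s = w' s) :
    ContainsCongPow k t n w → ContainsCongPow k t n w' := by
  rintro ⟨i, d, h1, h2, h3⟩
  refine ⟨i, d, h1, h2, fun j hj => ?_⟩
  have e1 : (∑ s ∈ Finset.Ico (i + j * d) (i + (j + 1) * d), w s)
      = ∑ s ∈ Finset.Ico (i + j * d) (i + (j + 1) * d), w' s := by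
    refine Finset.sum_congr rfl fun s hs => ?_
    rw [Finset.mem_Ico] at hs
    refine h s (lt_of_lt_of_le hs.2 (le_trans ?_ h2))
    have : (j + 1) * d ≤ t * d := Nat.mul_le_mul_right d hj
    omega
  have e2 : (∑ s ∈ Finset.Ico i (i + d), w s) = ∑ s ∈ Finset.Ico i (i + d), w' s := by
    refine Finset.sum_congr rfl fun s hs => ?_
    rw [Finset.mem_Ico] at hs
    refine h s (lt_of_lt_of_le hs.2 (le_trans ?_ h2))
    have : 1 * d ≤ t * d := Nat.mul_le_mul_right d (by omega)
    omega
  rw [← e1, ← e2]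
  exact h3 j hj

lemma sum_Ico_cast (k : ℕ) (w : ℕ → ℕ) {a b : ℕ} (h : a ≤ b) :
    ((∑ s ∈ Finset.Ico a b, w s : ℕ) : ZMod k)
      = ((∑ s ∈ Finset.range b, w s : ℕ) : ZMod k)
        - ((∑ s ∈ Finset.range a, w s : ℕ) : ZMod k) := by
  have : (∑ s ∈ Finset.range a, w s) + (∑ s ∈ Finset.Ico a b, w s)
      = ∑ s ∈ Finset.range b, w s := by
    simp only [Finset.range_eq_Ico]
    exact Finset.sum_Ico_consecutive w (Nat.zero_le a) h
  rw [eq_sub_iff_add_eq, add_comm, ← Nat.cast_add, this]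

lemma infinite_square (k : ℕ) (hk : 1 ≤ k) (w : ℕ → ℕ) : ∃ n, ContainsCongPow k 2 n w := by
  haveI : NeZero k := ⟨by omega⟩
  obtain ⟨a, ha, b, c, hc⟩ := Combinatorics.exists_mono_homothetic_copy
    ({0, 1, 2} : Finset ℕ) (fun n => ((∑ s ∈ Finset.range n, w s : ℕ) : ZMod k))
  have h0 := hc 0 (by simp)
  have h1 := hc 1 (by simp)
  have h2 := hc 2 (by simp)
  simp only [smul_eq_mul, mul_zero, mul_one, zero_add] at h0 h1 h2
  refine ⟨b + 2 * a, b, a, ha, le_refl _, fun j hj => ?_⟩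
  interval_cases j
  · simp [Nat.ModEq.refl]
  · have e1 := sum_Ico_cast k w (show b + 1 * a ≤ b + (1 + 1) * a by omega)
    have e2 := sum_Ico_cast k w (show b ≤ b + a by omega)
    rw [← ZMod.natCast_eq_natCast_iff, e1, e2,
      show b + (1 + 1) * a = a * 2 + b from by ring,
      show b + 1 * a = b + a from by ring, add_comm b a, h0, h1, h2]

lemma Lset_nonempty (k : ℕ) (hk : 1 ≤ k) :
    {n : ℕ | ∀ w : ℕ → ℕ, (∀ i, w i < k) → ContainsCongPow k 2 n w}.Nonempty := by
  by_contra hS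
  rw [Set.not_nonempty_iff_eq_empty] at hS
  have h : ∀ n, ∃ w : ℕ → ℕ, (∀ i, w i < k) ∧ ¬ ContainsCongPow k 2 n w := by
    intro n
    by_contra hc
    push_neg at hc
    have : n ∈ {n : ℕ | ∀ w : ℕ → ℕ, (∀ i, w i < k) → ContainsCongPow k 2 n w} :=
      fun w hw => hc w hw
    rw [hS] at this
    exact this
  set Ext : (ℕ → ℕ) → ℕ → Prop := fun p l => ∀ n, ∃ w : ℕ → ℕ,
    (∀ i, w i < k) ∧ (∀ i, i < l → w i = p i) ∧ ¬ ContainsCongPow k 2 n w with hExt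
  have hext0 : Ext (fun _ => 0) 0 := by
    intro n
    obtain ⟨w, h1, h2⟩ := h n
    exact ⟨w, h1, fun i hi => absurd hi (by omega), h2⟩
  have hstep : ∀ l (p : ℕ → ℕ), Ext p l →
      ∃ v, v < k ∧ Ext (Function.update p l v) (l + 1) := by
    intro l p hp
    choose W hW1 hW2 hW3 using hp
    obtain ⟨v, hv⟩ := Finite.exists_infinite_fiber (fun n => (⟨W n l, hW1 n l⟩ : Fin k))
    rw [Set.infinite_coe_iff] at hv
    refine ⟨v.1, v.2, fun m => ?_⟩
    obtain ⟨n, hn, hmn⟩ := hv.exists_gt m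
    refine ⟨W n, hW1 n, ?_, fun hc => hW3 n (contains_mono (le_of_lt hmn) hc)⟩
    intro i hi
    rcases Nat.lt_succ_iff_lt_or_eq.mp hi with h' | h'
    · rw [hW2 n i h', Function.update_of_ne (by omega)]
    · subst h'
      rw [Function.update_self]
      simp only [Set.mem_preimage, Set.mem_singleton_iff] at hn
      exact congrArg Fin.val hn
  let G : ∀ l : ℕ, {p : ℕ → ℕ // Ext p l} := fun l => Nat.rec ⟨fun _ => 0, hext0⟩
    (fun l ih => ⟨Function.update ih.1 l (hstep l ih.1 ih.2).choose,
      ((hstep l ih.1 ih.2).choose_spec).2⟩) l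
  let w : ℕ → ℕ := fun i => (G (i + 1)).1 i
  have hGsucc : ∀ l, (G (l + 1)).1
      = Function.update (G l).1 l (hstep l (G l).1 (G l).2).choose := fun l => rfl
  have hagree : ∀ l i, i < l → (G l).1 i = w i := by
    intro l
    induction l with
    | zero => omega
    | succ l ih =>
      intro i hi
      rcases Nat.lt_succ_iff_lt_or_eq.mp hi with h' | h'
      · rw [hGsucc l, Function.update_of_ne (by omega)]
        exact ih i h'
      · subst h'
        rfl
  have hwb : ∀ i, w i < k := by
    intro i
    have e : w i = (hstep i (G i).1 (G i).2).choose := by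
      show (G (i + 1)).1 i = _
      rw [hGsucc i, Function.update_self]
    rw [e]
    exact (hstep i (G i).1 (G i).2).choose_spec.1
  have havoid : ∀ n, ¬ ContainsCongPow k 2 n w := by
    intro n hc
    obtain ⟨w', h1, h2, h3⟩ := (G n).2 n
    refine h3 (contains_congr (fun s hs => ?_) hc)
    exact ((h2 s hs).trans (hagree n s hs)).symm
  obtain ⟨n, hn⟩ := infinite_square k hk w
  exact havoid n hn

/-- For every positive integer `k`, `𝓛(k) ≥ Ω(3, ⌊k/2⌋) - 1`. -/
theorem stmt_11 (k : ℕ) (hk : 1 ≤ k) : Omega 3 (k / 2) - 1 ≤ Lfn k 2 := by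
  rcases Nat.lt_or_ge k 2 with hk2 | hk2
  · -- k = 1, so k / 2 = 0 and the Omega constraints are unsatisfiable for n = 1
    have hm : k / 2 = 0 := by omega
    have h1 : Omega 3 (k / 2) ≤ 1 := by
      unfold Omega
      apply Nat.sInf_le
      intro x hx
      exfalso
      have := hx 1 le_rfl le_rfl
      rw [hm] at this
      omega
    omega
  · set m := k / 2 with hmdef
    have hm1 : 1 ≤ m := by omega
    have hm2 : 2 * m ≤ k := by omega
    have hne := Lset_nonempty k hk
    set n₀ := Lfn k 2 with hn₀
    have hmem : ∀ w : ℕ → ℕ, (∀ i, w i < k) → ContainsCongPow k 2 n₀ w :=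
      Nat.sInf_mem hne
    have hOm : Omega 3 m ≤ n₀ + 1 := by
      unfold Omega
      apply Nat.sInf_le
      intro x hx
      set w : ℕ → ℕ := fun s => if s < n₀ then x (s + 2) - x (s + 1) else 0 with hw
      -- bounds for x at position p + 1
      have bnd : ∀ p : ℕ, p ≤ n₀ → p * m + 1 ≤ x (p + 1) ∧ x (p + 1) ≤ p * m + m := by
        intro p hp
        have h := hx (p + 1) (by omega) (by omega)
        have e : (p + 1 - 1) * m = p * m := by simp
        have e2 : (p + 1) * m = p * m + m := by ring
        rw [e, e2] at h
        exact h
      have hdiff : ∀ s, s < n₀ →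
          x (s + 1) < x (s + 2) ∧ x (s + 2) - x (s + 1) ≤ 2 * m - 1 := by
        intro s hs
        have h1 := bnd s (by omega)
        have h2 := bnd (s + 1) (by omega)
        have r : (s + 1) * m = s * m + m := by ring
        have e : s + 1 + 1 = s + 2 := by omega
        rw [r, e] at h2
        omega
      have hwb : ∀ i, w i < k := by
        intro i
        by_cases hi : i < n₀
        · have := hdiff i hi
          simp only [hw, if_pos hi]
          omega
        · simp only [hw, if_neg hi]
          omega
      -- telescoping
      have tel : ∀ a b : ℕ, a ≤ b → b ≤ n₀ →
          (∑ s ∈ Finset.Ico a b, w s) = x (b + 1) - x (a + 1) ∧ x (a + 1) ≤ x (b + 1) := by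
        intro a b hab
        induction b, hab using Nat.le_induction with
        | base =>
          intro _
          simp
        | succ b hab ih =>
          intro hb
          have ihb := ih (by omega)
          have hbn : b < n₀ := by omega
          have hd := hdiff b hbn
          rw [Finset.sum_Ico_succ_top hab, ihb.1]
          have hwbv : w b = x (b + 2) - x (b + 1) := by
            simp only [hw, if_pos hbn]
          rw [hwbv]
          have e : b + 1 + 1 = b + 2 := by omega
          rw [e]
          constructor
          · omega
          · omega
      obtain ⟨i, d, hd, hle, hcong⟩ := hmem w hwb
      have hle' : i + 2 * d ≤ n₀ := hle
      have hc1 := hcong 1 (by omega)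
      have e1 : i + 1 * d = i + d := by ring
      have e2 : i + (1 + 1) * d = i + 2 * d := by ring
      rw [e1, e2] at hc1
      have t1 := tel i (i + d) (by omega) (by omega)
      have t2 := tel (i + d) (i + 2 * d) (by omega) (by omega)
      have ei : i + d + 1 = (i + d) + 1 := rfl
      rw [t1.1, t2.1] at hc1
      -- bounds on the three x-values
      have b1 := bnd i (by omega)
      have b2 := bnd (i + d) (by omega)
      have b3 := bnd (i + 2 * d) (by omega)
      have r2 : (i + d) * m = i * m + d * m := by ring
      have r3 : (i + 2 * d) * m = i * m + d * m + d * m := by ring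
      rw [r2] at b2
      rw [r3] at b3
      have hmono1 : x (i + 1) ≤ x (i + d + 1) := t1.2
      have hmono2 : x (i + d + 1) ≤ x (i + 2 * d + 1) := t2.2
      have hdm : m ≤ d * m := Nat.le_mul_of_pos_left m hd
      -- the two block sums are equal
      have heq : x (i + 2 * d + 1) - x (i + d + 1) = x (i + d + 1) - x (i + 1) := by
        refine Nat.ModEq.eq_of_abs_lt hc1 ?_
        rw [abs_sub_lt_iff]
        constructor <;> push_cast <;> omega
      refine ⟨x (i + 1), x (i + d + 1) - x (i + 1), by omega, fun j hj => ?_⟩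
      interval_cases j
      · exact ⟨i + 1, by omega, by omega, by omega⟩
      · exact ⟨i + d + 1, by omega, by omega, by omega⟩
      · exact ⟨i + 2 * d + 1, by omega, by omega, by omega⟩
    omega
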